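/- If I is a weak nil clean ideal of a ring R, then every element of the intersection of I with the Jacobson radical J(R) is nilpotent; that is, I ∩ J(R) is a nil ideal of R. -/

import Mathlib

private lemma jac_bot_mul_right {R : Type*} [Ring R] {x : R}
    (hx : x ∈ (⊥ : Ideal R).jacobson) (y : R) : x * y ∈ (⊥ : Ideal R).jacobson := by
  exact (⊥ : Ideal R).jacobson.mul_mem_right y hx

private lemma idem_in_jac_eq_zero {R : Type*} [Ring R] {e : R}
    (he : IsIdempotentElem e) (hJ : e ∈ (⊥ : Ideal R).jacobson) : e = 0 := by
  have h1 : (1 - e) - 1 ∈ (⊥ : Ideal R).jacobson := by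
    simpa using (⊥ : Ideal R).jacobson.neg_mem hJ
  obtain ⟨s, hs⟩ := Ideal.exists_mul_sub_mem_of_sub_one_mem_jacobson _ h1
  rw [Ideal.mem_bot, sub_eq_zero] at hs
  have : s * ((1 - e) * e) = e := by rw [← mul_assoc, hs, one_mul]
  rw [sub_mul, one_mul, he.eq, sub_self, mul_zero] at this
  exact this.symm

/-- If `I` is a weak nil clean ideal of `R` then `I ∩ J(R)` is nil. -/
theorem weakNilCleanIdeal_inter_jacobson_nil {R : Type*} [Ring R] (I : TwoSidedIdeal R)
    (h : ∀ x ∈ I, ∃ e n : R, IsIdempotentElem e ∧ IsNilpotent n ∧ (x = e + n ∨ x = -e + n)) :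
    ∀ x : R, x ∈ I → x ∈ (⊥ : Ideal R).jacobson → IsNilpotent x := by
  intro x hxI hxJ
  obtain ⟨e, n, he, ⟨k, hk⟩, hcase⟩ := h x hxI
  -- pick m nilpotent and c ∈ J with e = m + c, and record x = e + n covers both signs
  obtain ⟨m, hm, hc⟩ : ∃ m : R, m ^ k = 0 ∧ e - m ∈ (⊥ : Ideal R).jacobson := by
    rcases hcase with h1 | h1
    · refine ⟨-n, ?_, ?_⟩
      · rw [neg_pow, hk, mul_zero]
      · have : e - -n = x := by rw [h1]; abel
        rw [this]; exact hxJ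
    · refine ⟨n, hk, ?_⟩
      have : e - n = -x := by rw [h1]; abel
      rw [this]; exact (⊥ : Ideal R).jacobson.neg_mem hxJ
  -- if k = 0 the ring is trivial
  rcases Nat.eq_zero_or_pos k with rfl | hkpos
  · rw [pow_zero] at hm
    exact ⟨1, by rw [pow_one, ← mul_one x, hm, mul_zero]⟩
  -- e^i - m^i ∈ J for all i ≥ 1
  have key : ∀ i : ℕ, e ^ (i + 1) - m ^ (i + 1) ∈ (⊥ : Ideal R).jacobson := by
    intro i
    induction i with
    | zero => simpa using hc
    | succ j ih =>
      have heq : e ^ (j + 2) - m ^ (j + 2)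
          = (e ^ (j + 1) - m ^ (j + 1)) * e + m ^ (j + 1) * (e - m) := by
        noncomm_ring
      rw [heq]
      exact ((⊥ : Ideal R).jacobson).add_mem (jac_bot_mul_right ih e)
        (Ideal.mul_mem_left _ _ hc)
  -- hence e ∈ J
  obtain ⟨j, rfl⟩ : ∃ j, k = j + 1 := ⟨k - 1, (Nat.succ_pred_eq_of_pos hkpos).symm⟩
  have heJ : e ∈ (⊥ : Ideal R).jacobson := by
    have := key j
    rwa [hm, sub_zero, he.pow_succ_eq] at this
  have he0 : e = 0 := idem_in_jac_eq_zero he heJ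
  rcases hcase with h1 | h1 <;>
    exact ⟨j + 1, by rw [h1, he0]; simpa using hk⟩
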